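/- Let G be a finite group acting transitively on Ω, let δ > 0, and let S ⊆ G satisfy |S| ≥ (2+δ)|G|/d_H. Then the Schreier graph Sch(G, Ω, S) is an ε-expander with ε = δ/(4+δ): for every Γ ⊆ Ω with |Γ| ≤ |Ω|/2, the number of edges from Γ to its complement is at least ε|Γ|. -/

import Mathlib

open scoped BigOperators

/-- A subspace of `ℝ^Ω` invariant under the permutation action of `G`. -/
def PermInvariant (G : Type*) [Group G] {Ω : Type*} [MulAction G Ω]
    (p : Submodule ℝ (Ω → ℝ)) : Prop :=
  ∀ (g : G) (f : Ω → ℝ), f ∈ p → (fun ω => f (g⁻¹ • ω)) ∈ p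

/-- A nontrivial irreducible component of the permutation representation of `G` on `ℝ^Ω`. -/
def IsNontrivIrredComponent (G : Type*) [Group G] {Ω : Type*} [MulAction G Ω]
    (p : Submodule ℝ (Ω → ℝ)) : Prop :=
  PermInvariant G p ∧ p ≠ ⊥ ∧
    (∀ q : Submodule ℝ (Ω → ℝ), q ≤ p → PermInvariant G q → q = ⊥ ∨ q = p) ∧
    (∃ (g : G) (f : Ω → ℝ), f ∈ p ∧ (fun ω => f (g⁻¹ • ω)) ≠ f)


namespace SchreierAux
open Module Finset
open scoped RealInnerProductSpace
variable {G : Type*} [Group G] {Ω : Type*} [Fintype Ω] [DecidableEq Ω] [MulAction G Ω]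

def pL (g : G) : EuclideanSpace ℝ Ω →ₗ[ℝ] EuclideanSpace ℝ Ω where
  toFun u := WithLp.toLp 2 (fun ω => u (g⁻¹ • ω))
  map_add' u v := rfl
  map_smul' c u := rfl

lemma pL_apply (g : G) (u : EuclideanSpace ℝ Ω) (ω : Ω) : pL g u ω = u (g⁻¹ • ω) := rfl

lemma inner_eq (u v : EuclideanSpace ℝ Ω) : (inner ℝ u v : ℝ) = ∑ ω : Ω, u ω * v ω := by
  simp [PiLp.inner_apply, RCLike.inner_apply, mul_comm]

lemma inner_pL (g : G) (u v : EuclideanSpace ℝ Ω) :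
    (inner ℝ (pL g u) (pL g v) : ℝ) = inner ℝ u v := by
  rw [inner_eq, inner_eq]
  exact Fintype.sum_equiv (MulAction.toPerm (g⁻¹ : G))
    (fun ω => pL g u ω * pL g v ω) (fun ω => u ω * v ω)
    (fun ω => by simp [pL_apply, MulAction.toPerm_apply])

lemma pL_pL (g h : G) (u : EuclideanSpace ℝ Ω) : pL g (pL h u) = pL (g * h) u := by
  ext ω
  rw [pL_apply, pL_apply, pL_apply, mul_inv_rev, mul_smul]

/-- rank-one operator `u ↦ ⟪v,u⟫ v` -/
noncomputable def rk (v : EuclideanSpace ℝ Ω) : EuclideanSpace ℝ Ω →ₗ[ℝ] EuclideanSpace ℝ Ω where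
  toFun u := (inner ℝ v u : ℝ) • v
  map_add' u w := by rw [inner_add_right, add_smul]
  map_smul' c u := by rw [real_inner_smul_right, smul_smul, RingHom.id_apply]

variable [Fintype G]

/-- the averaging operator `∑ g, ⟪gf,·⟫ gf` -/
noncomputable def opA (G : Type*) [Group G] [Fintype G] [MulAction G Ω] (f : EuclideanSpace ℝ Ω) :
    EuclideanSpace ℝ Ω →ₗ[ℝ] EuclideanSpace ℝ Ω :=
  ∑ g : G, rk (pL g f)

lemma opA_apply (f u : EuclideanSpace ℝ Ω) :
    opA G f u = ∑ g : G, (inner ℝ (pL g f) u : ℝ) • pL g f := by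
  simp [opA, rk, LinearMap.sum_apply, LinearMap.coe_mk, AddHom.coe_mk]

lemma inner_opA (f u v : EuclideanSpace ℝ Ω) :
    (inner ℝ (opA G f u) v : ℝ) = ∑ g : G, (inner ℝ (pL g f) u : ℝ) * (inner ℝ (pL g f) v : ℝ) := by
  rw [opA_apply, sum_inner]
  exact Finset.sum_congr rfl fun g _ => real_inner_smul_left _ _ _

lemma opA_symm (f : EuclideanSpace ℝ Ω) : (opA G f).IsSymmetric := by
  intro u v
  rw [real_inner_comm (opA G f v) u, inner_opA, inner_opA]
  exact Finset.sum_congr rfl fun g _ => mul_comm _ _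

lemma opA_comm (f u : EuclideanSpace ℝ Ω) (g : G) :
    pL g (opA G f u) = opA G f (pL g u) := by
  rw [opA_apply, opA_apply, map_sum]
  refine Fintype.sum_equiv (Equiv.mulLeft g) _ _ fun h => ?_
  rw [map_smul, pL_pL, Equiv.coe_mulLeft]
  congr 1
  rw [← pL_pL g h f, inner_pL]


variable {G : Type*} [Group G] [Fintype G] {Ω : Type*} [Fintype Ω] [DecidableEq Ω] [MulAction G Ω]

/-- the constant-one vector -/
def cOne (Ω : Type*) [Fintype Ω] : EuclideanSpace ℝ Ω := WithLp.toLp 2 (fun _ => (1 : ℝ))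

lemma pL_cOne (g : G) : pL g (cOne Ω) = cOne Ω := rfl

lemma inner_pL_cOne (g : G) (f : EuclideanSpace ℝ Ω)
    (hf : (inner ℝ f (cOne Ω) : ℝ) = 0) : (inner ℝ (pL g f) (cOne Ω) : ℝ) = 0 := by
  rw [show (cOne Ω : EuclideanSpace ℝ Ω) = pL g (cOne Ω) from rfl, inner_pL, hf]

lemma key [MulAction.IsPretransitive G Ω] [Nonempty Ω]
    (d : ℕ)
    (hd : ∀ q : Submodule ℝ (EuclideanSpace ℝ Ω),
      (∀ (g : G) u, u ∈ q → pL g u ∈ q) → q ≠ ⊥ →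
      (∀ q' ≤ q, (∀ (g : G) u, u ∈ q' → pL g u ∈ q') → q' = ⊥ ∨ q' = q) →
      (∃ g : G, ∃ u, u ∈ q ∧ pL g u ≠ u) → d ≤ finrank ℝ q)
    (f : EuclideanSpace ℝ Ω) (hf : (inner ℝ f (cOne Ω) : ℝ) = 0) :
    (d : ℝ) * ∑ g : G, (inner ℝ (pL g f) f : ℝ) ^ 2
      ≤ (Fintype.card G : ℝ) * (inner ℝ f f : ℝ) ^ 2 := by
  classical
  set A := opA G f with hA
  have hsym := opA_symm (G := G) f
  have hn : finrank ℝ (EuclideanSpace ℝ Ω) = Fintype.card Ω := finrank_euclideanSpace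
  set b := hsym.eigenvectorBasis hn with hb
  set μ := hsym.eigenvalues hn with hμ
  have hne : Nonempty (Fin (Fintype.card Ω)) := ⟨⟨0, Fintype.card_pos⟩⟩
  obtain ⟨i0, hi0⟩ := Finite.exists_max μ
  set lam := μ i0 with hlamdef
  have happ : ∀ i, A (b i) = μ i • b i := fun i => hsym.apply_eigenvectorBasis hn i
  -- Parseval for f
  have hPar : (inner ℝ f f : ℝ) = ∑ i, (inner ℝ (b i) f : ℝ) ^ 2 := by
    rw [← OrthonormalBasis.sum_inner_mul_inner b f f]
    exact Finset.sum_congr rfl fun i _ => by rw [real_inner_comm f (b i), sq]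
  -- Rayleigh bound
  have hRay : (inner ℝ (A f) f : ℝ) ≤ lam * (inner ℝ f f : ℝ) := by
    rw [← OrthonormalBasis.sum_inner_mul_inner b (A f) f, hPar, Finset.mul_sum]
    refine Finset.sum_le_sum fun i _ => ?_
    rw [hsym f (b i), happ i, real_inner_smul_right, real_inner_comm f (b i), mul_assoc, ← sq]
    exact mul_le_mul_of_nonneg_right (hi0 i) (sq_nonneg _)
  have hSX : (inner ℝ (A f) f : ℝ) = ∑ g : G, (inner ℝ (pL g f) f : ℝ) ^ 2 := by
    rw [hA, inner_opA]
    exact Finset.sum_congr rfl fun g _ => (sq _).symm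
  have hSX0 : (0 : ℝ) ≤ ∑ g : G, (inner ℝ (pL g f) f : ℝ) ^ 2 :=
    Finset.sum_nonneg fun g _ => sq_nonneg _
  have hF0 : (0 : ℝ) ≤ (inner ℝ f f : ℝ) := real_inner_self_nonneg
  by_cases hlam : lam ≤ 0
  · have h1 : ∑ g : G, (inner ℝ (pL g f) f : ℝ) ^ 2 ≤ 0 := by
      rw [← hSX]; exact hRay.trans (mul_nonpos_of_nonpos_of_nonneg hlam hF0)
    have h2 : ∑ g : G, (inner ℝ (pL g f) f : ℝ) ^ 2 = 0 := le_antisymm h1 hSX0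
    rw [h2, mul_zero]
    positivity
  push_neg at hlam
  -- eigenspace of lam
  set W := Module.End.eigenspace A lam with hW
  have hmemW : ∀ u, u ∈ W ↔ A u = lam • u := fun u => Module.End.mem_eigenspace_iff
  have hbW : b i0 ∈ W := (hmemW _).mpr (happ i0)
  have hWne : W ≠ ⊥ := by
    intro h
    have : b i0 = 0 := by rw [← Submodule.mem_bot (R := ℝ), ← h]; exact hbW
    exact b.toBasis.ne_zero i0 (by simpa using this)
  have hWinv : ∀ (g : G) u, u ∈ W → pL g u ∈ W := by
    intro g u hu
    rw [hmemW] at hu ⊢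
    rw [hA, ← opA_comm, ← hA, hu, map_smul]
  have hWperp : ∀ u ∈ W, (inner ℝ u (cOne Ω) : ℝ) = 0 := by
    intro u hu
    rw [hmemW] at hu
    have h1 : (inner ℝ (A u) (cOne Ω) : ℝ) = 0 := by
      rw [hA, inner_opA]
      exact Finset.sum_eq_zero fun g _ => by rw [inner_pL_cOne g f hf, mul_zero]
    rw [hu, real_inner_smul_left] at h1
    exact (mul_eq_zero.mp h1).resolve_left (ne_of_gt hlam)
  -- minimal invariant subspace of W
  set Kset : Set ℕ := {k | ∃ q : Submodule ℝ (EuclideanSpace ℝ Ω),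
    q ≤ W ∧ (∀ (g : G) u, u ∈ q → pL g u ∈ q) ∧ q ≠ ⊥ ∧ finrank ℝ q = k} with hKset
  have hKne : finrank ℝ W ∈ Kset := ⟨W, le_rfl, hWinv, hWne, rfl⟩
  obtain ⟨q, hqW, hqinv, hqne, hqrk⟩ := Nat.sInf_mem (⟨_, hKne⟩ : Kset.Nonempty)
  have hqmin : ∀ q' ≤ q, (∀ (g : G) u, u ∈ q' → pL g u ∈ q') → q' = ⊥ ∨ q' = q := by
    intro q' hle hinv'
    by_cases h : q' = ⊥
    · exact Or.inl h
    · right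
      have h1 : finrank ℝ q' ∈ Kset := ⟨q', hle.trans hqW, hinv', h, rfl⟩
      have h2 : finrank ℝ q ≤ finrank ℝ q' := by rw [hqrk]; exact Nat.sInf_le h1
      exact Submodule.eq_of_le_of_finrank_le hle h2
  have hmov : ∃ g : G, ∃ u, u ∈ q ∧ pL g u ≠ u := by
    by_contra h
    push_neg at h
    apply hqne
    rw [Submodule.eq_bot_iff]
    intro u hu
    obtain ⟨ω0⟩ := ‹Nonempty Ω›
    have hconst : ∀ ω : Ω, u ω = u ω0 := by
      intro ω
      obtain ⟨g, hg⟩ := MulAction.exists_smul_eq G ω0 ω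
      have h2 : pL g⁻¹ u ω0 = u ω0 := by rw [h g⁻¹ u hu]
      rwa [pL_apply, inv_inv, hg] at h2
    have h1 := hWperp u (hqW hu)
    rw [inner_eq] at h1
    simp only [cOne, mul_one] at h1
    have h3 : ∑ ω : Ω, u ω = (Fintype.card Ω : ℝ) * u ω0 := by
      rw [Finset.sum_congr rfl fun ω _ => hconst ω]
      simp [Finset.sum_const, nsmul_eq_mul]
    have h4 : u ω0 = 0 := by
      have hcard : (0 : ℝ) < Fintype.card Ω := by positivity
      rw [h1] at h3
      exact (mul_eq_zero.mp h3.symm).resolve_left (ne_of_gt hcard)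
    ext ω
    rw [hconst ω, h4]; rfl
  have hdq : d ≤ finrank ℝ q := hd q hqinv hqne hqmin hmov
  have hdW : (d : ℝ) ≤ (finrank ℝ W : ℝ) := by
    exact_mod_cast hdq.trans (Submodule.finrank_mono hqW)
  -- Bessel bound on W
  set m := finrank ℝ W with hm
  set c := stdOrthonormalBasis ℝ W with hc
  have hortho : Orthonormal ℝ (fun i : Fin m => ((c i : W) : EuclideanSpace ℝ Ω)) := by
    rw [orthonormal_iff_ite]
    intro i j
    rw [← Submodule.coe_inner]
    exact orthonormal_iff_ite.mp c.orthonormal i j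
  have hnorm1 : ∀ i : Fin m, (inner ℝ ((c i : W) : EuclideanSpace ℝ Ω) ((c i : W) : EuclideanSpace ℝ Ω) : ℝ) = 1 := by
    intro i
    have := orthonormal_iff_ite.mp hortho i i
    simpa using this
  have hBes : lam * m ≤ (Fintype.card G : ℝ) * (inner ℝ f f : ℝ) := by
    have h1 : ∀ i : Fin m, (inner ℝ (A ((c i : W) : EuclideanSpace ℝ Ω)) ((c i : W) : EuclideanSpace ℝ Ω) : ℝ) = lam := by
      intro i
      rw [(hmemW _).mp (c i).2, real_inner_smul_left, hnorm1 i, mul_one]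
    have h2 : lam * m = ∑ i : Fin m,
        (inner ℝ (A ((c i : W) : EuclideanSpace ℝ Ω)) ((c i : W) : EuclideanSpace ℝ Ω) : ℝ) := by
      rw [Finset.sum_congr rfl fun i _ => h1 i]
      simp [mul_comm]
    rw [h2]
    have h3 : ∀ i : Fin m, (inner ℝ (A ((c i : W) : EuclideanSpace ℝ Ω)) ((c i : W) : EuclideanSpace ℝ Ω) : ℝ)
        = ∑ g : G, (inner ℝ (pL g f) ((c i : W) : EuclideanSpace ℝ Ω) : ℝ) ^ 2 := by
      intro i
      rw [hA, inner_opA]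
      exact Finset.sum_congr rfl fun g _ => (sq _).symm
    rw [Finset.sum_congr rfl fun i _ => h3 i, Finset.sum_comm]
    have h4 : ∀ g : G, ∑ i : Fin m, (inner ℝ (pL g f) ((c i : W) : EuclideanSpace ℝ Ω) : ℝ) ^ 2
        ≤ (inner ℝ f f : ℝ) := by
      intro g
      have hb1 : ∑ i ∈ Finset.univ, ‖(inner ℝ ((fun i : Fin m => ((c i : W) : EuclideanSpace ℝ Ω)) i) (pL g f) : ℝ)‖ ^ 2 ≤ ‖pL g f‖ ^ 2 :=
        Orthonormal.sum_inner_products_le (pL g f) hortho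
      have hb2 : ‖pL g f‖ ^ 2 = (inner ℝ f f : ℝ) := by
        rw [← real_inner_self_eq_norm_sq, inner_pL]
      rw [hb2] at hb1
      refine le_trans (le_of_eq ?_) hb1
      refine Finset.sum_congr rfl fun i _ => ?_
      rw [Real.norm_eq_abs, sq_abs, real_inner_comm]
    calc ∑ g : G, ∑ i : Fin m, (inner ℝ (pL g f) ((c i : W) : EuclideanSpace ℝ Ω) : ℝ) ^ 2
        ≤ ∑ _g : G, (inner ℝ f f : ℝ) := Finset.sum_le_sum fun g _ => h4 g
      _ = (Fintype.card G : ℝ) * (inner ℝ f f : ℝ) := by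
          simp [Finset.sum_const, nsmul_eq_mul]
  -- combine
  have hSXle : ∑ g : G, (inner ℝ (pL g f) f : ℝ) ^ 2 ≤ lam * (inner ℝ f f : ℝ) := by
    rw [← hSX]; exact hRay
  have e1 : (d:ℝ) * (∑ g : G, (inner ℝ (pL g f) f : ℝ) ^ 2) ≤ (d:ℝ) * (lam * (inner ℝ f f : ℝ)) :=
    mul_le_mul_of_nonneg_left hSXle (Nat.cast_nonneg d)
  have e2 : (d:ℝ) * (lam * (inner ℝ f f : ℝ)) ≤ (m:ℝ) * (lam * (inner ℝ f f : ℝ)) :=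
    mul_le_mul_of_nonneg_right hdW (mul_nonneg hlam.le hF0)
  have e4 : (lam * (m:ℝ)) * (inner ℝ f f : ℝ) ≤ ((Fintype.card G : ℝ) * (inner ℝ f f : ℝ)) * (inner ℝ f f : ℝ) :=
    mul_le_mul_of_nonneg_right hBes hF0
  nlinarith [e1, e2, e4]


lemma transfer {G : Type*} [Group G] {Ω : Type*} [Fintype Ω] [DecidableEq Ω]
    [MulAction G Ω] (d : ℕ)
    (hd2 : ∀ k ∈ {k : ℕ | ∃ p : Submodule ℝ (Ω → ℝ),
      IsNontrivIrredComponent G p ∧ k = Module.finrank ℝ p}, d ≤ k) :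
    ∀ q : Submodule ℝ (EuclideanSpace ℝ Ω),
      (∀ (g : G) u, u ∈ q → pL g u ∈ q) → q ≠ ⊥ →
      (∀ q' ≤ q, (∀ (g : G) u, u ∈ q' → pL g u ∈ q') → q' = ⊥ ∨ q' = q) →
      (∃ g : G, ∃ u, u ∈ q ∧ pL g u ≠ u) → d ≤ Module.finrank ℝ q := by
  intro q hinv hne hmin hmov
  set e : EuclideanSpace ℝ Ω ≃ₗ[ℝ] (Ω → ℝ) := WithLp.linearEquiv 2 ℝ (Ω → ℝ) with he
  set p : Submodule ℝ (Ω → ℝ) := q.map (e : EuclideanSpace ℝ Ω →ₗ[ℝ] (Ω → ℝ)) with hp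
  have h1 : PermInvariant G p := by
    intro g x hx
    rw [hp, Submodule.mem_map_equiv] at hx ⊢
    exact hinv g (e.symm x) hx
  have h2 : p ≠ ⊥ := by
    intro h
    apply hne
    rw [Submodule.eq_bot_iff]
    intro u hu
    have h3 : e u ∈ p := Submodule.mem_map_of_mem hu
    rw [h, Submodule.mem_bot] at h3
    exact (map_eq_zero_iff e e.injective).mp h3
  have h3 : ∀ p' : Submodule ℝ (Ω → ℝ), p' ≤ p → PermInvariant G p' → p' = ⊥ ∨ p' = p := by
    intro p' hle hinv'
    set r : Submodule ℝ (EuclideanSpace ℝ Ω) := p'.map (e.symm : (Ω → ℝ) →ₗ[ℝ] EuclideanSpace ℝ Ω) with hr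
    have hrle : r ≤ q := by
      intro x hx
      rw [hr, Submodule.mem_map_equiv, LinearEquiv.symm_symm] at hx
      have := hle hx
      rw [hp, Submodule.mem_map_equiv, LinearEquiv.symm_apply_apply] at this
      exact this
    have hrinv : ∀ (g : G) u, u ∈ r → pL g u ∈ r := by
      intro g u hu
      rw [hr, Submodule.mem_map_equiv, LinearEquiv.symm_symm] at hu ⊢
      exact hinv' g (e u) hu
    rcases hmin r hrle hrinv with hbot | heq
    · left
      rw [Submodule.eq_bot_iff]
      intro x hx
      have h4 : e.symm x ∈ r := Submodule.mem_map_of_mem hx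
      rw [hbot, Submodule.mem_bot] at h4
      exact (map_eq_zero_iff e.symm e.symm.injective).mp h4
    · right
      ext x
      rw [hp, Submodule.mem_map_equiv, ← heq, hr, Submodule.mem_map_equiv,
        LinearEquiv.symm_symm, LinearEquiv.apply_symm_apply]
  have h4 : ∃ (g : G) (x : Ω → ℝ), x ∈ p ∧ (fun ω => x (g⁻¹ • ω)) ≠ x := by
    obtain ⟨g, u, hu, hmoved⟩ := hmov
    refine ⟨g, e u, Submodule.mem_map_of_mem hu, fun hcontra => hmoved ?_⟩
    have h5 := congrArg e.symm hcontra
    rw [LinearEquiv.symm_apply_apply] at h5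
    exact h5
  have h6 : d ≤ Module.finrank ℝ p := hd2 _ ⟨p, ⟨h1, h2, h3, h4⟩, rfl⟩
  rwa [hp, LinearEquiv.finrank_map_eq e q] at h6



end SchreierAux

set_option maxHeartbeats 2000000 in
/-- Expansion of Schreier graphs: if `|S| ≥ (2+δ)|G|/d_H`, then for every `Γ ⊆ Ω` with
`|Γ| ≤ |Ω|/2`, the number of Schreier-graph edges from `Γ` to its complement (pairs
`(γ, s)` with `γ ∈ Γ`, `s ∈ S`, `s • γ ∉ Γ`) is at least `(δ/(4+δ))·|Γ|`. -/
theorem schreier_graph_expander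
    {G : Type*} [Group G] [Fintype G] {Ω : Type*} [Fintype Ω] [DecidableEq Ω]
    [MulAction G Ω] [MulAction.IsPretransitive G Ω]
    (d : ℕ)
    (hd : IsLeast {k : ℕ | ∃ p : Submodule ℝ (Ω → ℝ),
      IsNontrivIrredComponent G p ∧ k = Module.finrank ℝ p} d)
    (δ : ℝ) (hδ : 0 < δ)
    (S : Finset G) (hS : (S.card : ℝ) ≥ (2 + δ) * (Fintype.card G : ℝ) / (d : ℝ)) :
    ∀ Γ : Finset Ω, (Γ.card : ℝ) ≤ (Fintype.card Ω : ℝ) / 2 →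
      ((((Γ ×ˢ S).filter (fun p : Ω × G => p.2 • p.1 ∉ Γ)).card : ℝ)) ≥
        (δ / (4 + δ)) * (Γ.card : ℝ) := by
  classical
  intro Γ hΓ
  rcases eq_or_ne Γ ∅ with rfl | hΓne
  · simp
  have hΓpos : 0 < Γ.card := Finset.card_pos.mpr (Finset.nonempty_of_ne_empty hΓne)
  have hΓR : (0:ℝ) < Γ.card := by exact_mod_cast hΓpos
  have hΩ : Nonempty Ω := ⟨(Finset.nonempty_of_ne_empty hΓne).choose⟩
  have hn0 : 0 < Fintype.card Ω := Fintype.card_pos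
  have hnR : (0:ℝ) < (Fintype.card Ω : ℝ) := by exact_mod_cast hn0
  obtain ⟨⟨p0, hp0, hdp0⟩, hdlb⟩ := hd
  -- positivity of d
  have hd1 : 0 < d := by
    rcases Nat.eq_zero_or_pos d with h | h
    · exfalso
      have h0 : Module.finrank ℝ p0 = 0 := by omega
      exact hp0.2.1 (Submodule.finrank_eq_zero.mp h0)
    · exact h
  have hdR : (0:ℝ) < (d:ℝ) := by exact_mod_cast hd1
  -- d ≤ |G|
  have hdG : (d:ℝ) ≤ (Fintype.card G : ℝ) := by
    have h1 : d ≤ Module.finrank ℝ (Ω → ℝ) := hdp0 ▸ p0.finrank_le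
    have h2 : Module.finrank ℝ (Ω → ℝ) = Fintype.card Ω := by
      simp [Module.finrank_pi]
    have h3 : Fintype.card Ω ≤ Fintype.card G := by
      obtain ⟨ω0⟩ := hΩ
      exact Fintype.card_le_of_surjective (fun g : G => g • ω0)
        (fun ω => MulAction.exists_smul_eq G ω0 ω)
    exact_mod_cast (h1.trans_eq h2).trans h3
  -- the test vector
  set α : ℝ := (Γ.card : ℝ) / (Fintype.card Ω : ℝ) with hα
  set f : EuclideanSpace ℝ Ω := WithLp.toLp 2 (fun ω => (if ω ∈ Γ then (1:ℝ) else 0) - α) with hf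
  have hαn : α * (Fintype.card Ω : ℝ) = Γ.card := div_mul_cancel₀ _ (ne_of_gt hnR)
  have hα2 : α ≤ 1/2 := by
    rw [hα, div_le_iff₀ hnR]
    linarith
  have hα0 : 0 ≤ α := by positivity
  have hsumind : ∑ ω : Ω, (if ω ∈ Γ then (1:ℝ) else 0) = Γ.card := by
    rw [Finset.sum_ite_mem, Finset.univ_inter, Finset.sum_const, nsmul_eq_mul, mul_one]
  have hfc : (inner ℝ f (SchreierAux.cOne Ω) : ℝ) = 0 := by
    rw [SchreierAux.inner_eq]
    simp only [SchreierAux.cOne, mul_one, hf]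
    rw [Finset.sum_sub_distrib, hsumind, Finset.sum_const, nsmul_eq_mul]
    rw [Finset.card_univ]
    linarith [hαn]
  have hF : (inner ℝ f f : ℝ) = (Γ.card : ℝ) * (1 - α) := by
    rw [SchreierAux.inner_eq]
    have hterm : ∀ ω : Ω, f ω * f ω =
        (if ω ∈ Γ then (1:ℝ) else 0) - 2*α*(if ω ∈ Γ then (1:ℝ) else 0) + α^2 := by
      intro ω
      by_cases h : ω ∈ Γ <;> simp [hf, h] <;> ring
    rw [Finset.sum_congr rfl fun ω _ => hterm ω]
    rw [Finset.sum_add_distrib, Finset.sum_sub_distrib, hsumind, ← Finset.mul_sum, hsumind,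
      Finset.sum_const, nsmul_eq_mul, Finset.card_univ]
    have h5 : (Fintype.card Ω : ℝ) * α^2 = α * Γ.card := by
      rw [sq, ← mul_assoc, mul_comm ((Fintype.card Ω : ℝ)) α, hαn, mul_comm]
    rw [h5]; ring
  have hF0 : (0:ℝ) ≤ (inner ℝ f f : ℝ) := real_inner_self_nonneg
  have hFhalf : (Γ.card : ℝ) / 2 ≤ (inner ℝ f f : ℝ) := by
    rw [hF]; nlinarith
  -- per-generator inner ℝ products
  have hx : ∀ s : G, (inner ℝ (SchreierAux.pL s f) f : ℝ)
      = ((Γ.filter (fun γ => s • γ ∈ Γ)).card : ℝ) - α * Γ.card := by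
    intro s
    rw [SchreierAux.inner_eq]
    have hre : ∑ γ : Ω, f γ * f (s • γ) = ∑ ω : Ω, SchreierAux.pL s f ω * f ω := by
      refine Fintype.sum_equiv (MulAction.toPerm s) _ _ fun γ => ?_
      rw [MulAction.toPerm_apply, SchreierAux.pL_apply, inv_smul_smul]
    rw [← hre]
    have hterm : ∀ γ : Ω, f γ * f (s • γ) =
        (if γ ∈ Γ ∧ s • γ ∈ Γ then (1:ℝ) else 0) - α*(if γ ∈ Γ then (1:ℝ) else 0)
          - α*(if s • γ ∈ Γ then (1:ℝ) else 0) + α^2 := by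
      intro γ
      by_cases h1 : γ ∈ Γ <;> by_cases h2 : s • γ ∈ Γ <;> simp [hf, h1, h2] <;> ring
    rw [Finset.sum_congr rfl fun γ _ => hterm γ]
    have hsum1 : ∑ γ : Ω, (if γ ∈ Γ ∧ s • γ ∈ Γ then (1:ℝ) else 0)
        = ((Γ.filter (fun γ => s • γ ∈ Γ)).card : ℝ) := by
      rw [Finset.sum_boole]
      norm_cast
      congr 1
      ext γ
      simp [Finset.mem_filter]
    have hsum2 : ∑ γ : Ω, (if s • γ ∈ Γ then (1:ℝ) else 0) = Γ.card := by
      rw [← hsumind]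
      refine Fintype.sum_equiv (MulAction.toPerm s) _ _ fun γ => rfl
    rw [Finset.sum_add_distrib, Finset.sum_sub_distrib, Finset.sum_sub_distrib, hsum1,
      ← Finset.mul_sum, hsumind, ← Finset.mul_sum, hsum2, Finset.sum_const, nsmul_eq_mul,
      Finset.card_univ]
    have h5 : (Fintype.card Ω : ℝ) * α^2 = α * Γ.card := by
      rw [sq, ← mul_assoc, mul_comm ((Fintype.card Ω : ℝ)) α, hαn, mul_comm]
    rw [h5]; ring
  -- edge count per generator
  have hedge : ∀ s : G, ((Γ.filter (fun γ => s • γ ∉ Γ)).card : ℝ)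
      = (inner ℝ f f : ℝ) - (inner ℝ (SchreierAux.pL s f) f : ℝ) := by
    intro s
    have h1 := Finset.card_filter_add_card_filter_not
      (s := Γ) (p := fun γ => s • γ ∈ Γ)
    have h2 : ((Γ.filter (fun γ => s • γ ∉ Γ)).card : ℝ)
        = (Γ.card : ℝ) - ((Γ.filter (fun γ => s • γ ∈ Γ)).card : ℝ) := by
      have := h1
      push_cast [← this]
      ring
    rw [h2, hx s, hF]
    ring
  -- total edge count
  have hcountN : ((Γ ×ˢ S).filter (fun p : Ω × G => p.2 • p.1 ∉ Γ)).card
      = ∑ s ∈ S, (Γ.filter (fun γ => s • γ ∉ Γ)).card := by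
    rw [Finset.card_filter, Finset.sum_product, Finset.sum_comm]
    exact Finset.sum_congr rfl fun s _ => (Finset.card_filter _ _).symm
  have hcount : (((Γ ×ˢ S).filter (fun p : Ω × G => p.2 • p.1 ∉ Γ)).card : ℝ)
      = (S.card : ℝ) * (inner ℝ f f : ℝ) - ∑ s ∈ S, (inner ℝ (SchreierAux.pL s f) f : ℝ) := by
    rw [hcountN]
    push_cast
    rw [Finset.sum_congr rfl fun s _ => hedge s, Finset.sum_sub_distrib, Finset.sum_const,
      nsmul_eq_mul]
  -- spectral bound
  haveI := hΩ
  have hkey := SchreierAux.key d (SchreierAux.transfer d (fun k hk => hdlb hk)) f hfc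
  -- Chebyshev / Cauchy-Schwarz
  have hT2 : (∑ s ∈ S, (inner ℝ (SchreierAux.pL s f) f : ℝ))^2
      ≤ (S.card : ℝ) * ∑ s ∈ S, (inner ℝ (SchreierAux.pL s f) f : ℝ)^2 :=
    sq_sum_le_card_mul_sum_sq
  have hsub : ∑ s ∈ S, (inner ℝ (SchreierAux.pL s f) f : ℝ)^2
      ≤ ∑ g : G, (inner ℝ (SchreierAux.pL g f) f : ℝ)^2 :=
    Finset.sum_le_sum_of_subset_of_nonneg (Finset.subset_univ S) (fun _ _ _ => sq_nonneg _)
  -- numerics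
  set σ := (S.card : ℝ) with hσdef
  set F := (inner ℝ f f : ℝ) with hFdef
  set T := ∑ s ∈ S, (inner ℝ (SchreierAux.pL s f) f : ℝ) with hTdef
  set SX := ∑ g : G, (inner ℝ (SchreierAux.pL g f) f : ℝ)^2 with hSXdef
  have hSX0 : 0 ≤ SX := Finset.sum_nonneg fun _ _ => sq_nonneg _
  have hσCG : (2 + δ) * (Fintype.card G : ℝ) ≤ σ * d := by
    rw [ge_iff_le, div_le_iff₀ hdR] at hS
    linarith
  have hσ2 : 2 + δ ≤ σ := by
    nlinarith
  have hσ0 : 0 < σ := by linarith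
  have hSXle : (2 + δ) * SX ≤ σ * F^2 := by
    have h1 : (2+δ) * ((d:ℝ) * SX) ≤ (2+δ) * ((Fintype.card G : ℝ) * F^2) :=
      mul_le_mul_of_nonneg_left hkey (by linarith)
    have h2 : (2+δ) * (Fintype.card G : ℝ) * F^2 ≤ σ * (d:ℝ) * F^2 :=
      mul_le_mul_of_nonneg_right hσCG (sq_nonneg F)
    have h3 : (d:ℝ) * ((2+δ) * SX) ≤ (d:ℝ) * (σ * F^2) := by nlinarith
    exact le_of_mul_le_mul_left h3 hdR
  set u := Real.sqrt (2 + δ) with hu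
  have hu2 : u^2 = 2 + δ := Real.sq_sqrt (by linarith)
  have hu0 : 0 < u := Real.sqrt_pos.mpr (by linarith)
  have hu1 : 1 < u := by nlinarith
  have hu3 : (2:ℝ) ≤ u^3 := by nlinarith
  -- bound on T
  have hTle : u * T ≤ σ * F := by
    have h1 : (u*T)^2 ≤ (σ*F)^2 := by
      have h2 : T^2 ≤ σ * SX := le_trans hT2 (mul_le_mul_of_nonneg_left hsub (le_of_lt hσ0))
      have h3 : (2+δ) * T^2 ≤ (2+δ) * (σ * SX) := mul_le_mul_of_nonneg_left h2 (by linarith)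
      have h4 : σ * ((2+δ) * SX) ≤ σ * (σ * F^2) := mul_le_mul_of_nonneg_left hSXle (le_of_lt hσ0)
      nlinarith
    have h5 := Real.sqrt_le_sqrt (le_of_lt (lt_of_le_of_lt h1 (lt_add_one _)))
    rcases le_or_gt (u*T) 0 with h | h
    · exact h.trans (by positivity)
    · have h6 := Real.sqrt_le_sqrt h1
      rwa [Real.sqrt_sq (le_of_lt h), Real.sqrt_sq (by positivity)] at h6
  -- conclusion
  rw [ge_iff_le, hcount]
  have hfinal : δ / (4 + δ) * (Γ.card : ℝ) ≤ (u^2 - u) / 2 * (Γ.card : ℝ) := by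
    have hden : (0:ℝ) < 4 + δ := by linarith
    have hineq : δ / (4 + δ) ≤ (u^2 - u) / 2 := by
      rw [div_le_div_iff₀ hden (by norm_num)]
      nlinarith [mul_nonneg (sub_nonneg.2 hu1.le) (sub_nonneg.2 hu3)]
    exact mul_le_mul_of_nonneg_right hineq (le_of_lt hΓR)
  refine le_trans hfinal ?_
  have hstep1 : (u^2 - u) / 2 * (Γ.card : ℝ) ≤ (u^2 - u) * F := by
    have h7 : 0 ≤ u^2 - u := by nlinarith
    have := mul_le_mul_of_nonneg_left hFhalf h7
    calc (u^2 - u) / 2 * (Γ.card : ℝ) = (u^2 - u) * ((Γ.card : ℝ)/2) := by ring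
      _ ≤ (u^2 - u) * F := this
  refine le_trans hstep1 ?_
  -- (u² − u) F ≤ σ F − T
  have h8 : u * T ≤ u * (σ * F / u) := by
    rw [mul_div_cancel₀ _ (ne_of_gt hu0)]
    exact hTle
  have h9 : T ≤ σ * F / u := le_of_mul_le_mul_left h8 hu0
  have h10 : σ * F / u ≤ σ * F * (1/u) := by rw [mul_one_div]
  have h11 : (u^2 - u) * F = u^2 * F * (1 - 1/u) := by
    field_simp
  have h12 : u^2 * F * (1 - 1/u) ≤ σ * F * (1 - 1/u) := by
    have h13 : 0 ≤ 1 - 1/u := by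
      rw [sub_nonneg, div_le_one hu0]
      linarith
    have h14 : u^2 * F ≤ σ * F := mul_le_mul_of_nonneg_right (hu2 ▸ hσ2) hF0
    exact mul_le_mul_of_nonneg_right h14 h13
  have h15 : σ * F * (1 - 1/u) = σ * F - σ * F * (1/u) := by ring
  have h16 : σ * F * (1/u) = σ * F / u := by rw [mul_one_div]
  linarith
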